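/- ₂F₁(1/2, 1/2; 1; 1/2) = Γ(1/4)^2 / (2π^{3/2}). -/

import Mathlib

open scoped BigOperators

/-- Real Pochhammer symbol. -/
noncomputable def pochR (a : ℝ) (n : ℕ) : ℝ := ∏ i ∈ Finset.range n, (a + i)

/-- Real Gaussian hypergeometric function `₂F₁(a,b;c;x)`. -/
noncomputable def hypR (a b c : ℝ) (x : ℝ) : ℝ :=
  ∑' n : ℕ, pochR a n * pochR b n / pochR c n * x ^ n / (n.factorial : ℝ)

open MeasureTheory

noncomputable def cc (n : ℕ) : ℝ := pochR (1/2) n / n.factorial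

lemma cc_zero : cc 0 = 1 := by simp [cc, pochR]

lemma pochR_zero (a : ℝ) : pochR a 0 = 1 := by simp [pochR]

lemma pochR_succ (a : ℝ) (n : ℕ) : pochR a (n+1) = pochR a n * (a + n) := by
  simp [pochR, Finset.prod_range_succ]

lemma pochR_one (n : ℕ) : pochR 1 n = n.factorial := by
  induction n with
  | zero => simp [pochR]
  | succ n ih => rw [pochR_succ, ih, Nat.factorial_succ]; push_cast; ring

lemma pochR_half_pos (n : ℕ) : 0 < pochR (1/2) n := by
  apply Finset.prod_pos; intro i _; positivity

lemma cc_pos (n : ℕ) : 0 < cc n := by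
  have := pochR_half_pos n
  have : (0:ℝ) < n.factorial := by positivity
  unfold cc; positivity

lemma cc_le_one (n : ℕ) : cc n ≤ 1 := by
  rw [cc, div_le_one (by positivity)]
  calc pochR (1/2) n ≤ pochR 1 n := by
        apply Finset.prod_le_prod
        · intro i _; positivity
        · intro i _; linarith [ (by norm_num : (1:ℝ)/2 ≤ 1) ]
    _ = n.factorial := pochR_one n

lemma cc_succ (n : ℕ) : ((n:ℝ)+1) * cc (n+1) = ((n:ℝ) + 1/2) * cc n := by
  have hf : ((n+1).factorial : ℝ) = (n.factorial : ℝ) * ((n:ℝ)+1) := by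
    rw [Nat.factorial_succ]; push_cast; ring
  rw [cc, cc, pochR_succ, hf]
  have h1 : ((n:ℝ)+1) ≠ 0 := by positivity
  have h2 : (n.factorial : ℝ) ≠ 0 := by positivity
  field_simp
  ring

noncomputable def FF (y : ℝ) : ℝ := ∑' n, cc n * y ^ n

lemma summable_FF {y : ℝ} (hy : |y| < 1) : Summable (fun n => cc n * y ^ n) := by
  apply Summable.of_norm_bounded (summable_geometric_of_lt_one (abs_nonneg y) hy)
  intro n
  rw [norm_mul, norm_pow, Real.norm_eq_abs, Real.norm_eq_abs,
    abs_of_pos (cc_pos n)]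
  calc cc n * |y|^n ≤ 1 * |y|^n := by
        apply mul_le_mul_of_nonneg_right (cc_le_one n) (by positivity)
    _ = |y|^n := one_mul _

noncomputable def DD (y : ℝ) : ℝ := ∑' n, cc n * ((n:ℝ) * y ^ (n-1))

lemma uu_summable : Summable (fun n : ℕ => (4/3 : ℝ) * ((n:ℝ) * (3/4)^n)) := by
  apply Summable.mul_left
  have := summable_pow_mul_geometric_of_norm_lt_one (R := ℝ) 1 (r := 3/4)
    (by rw [Real.norm_eq_abs, abs_of_pos (by norm_num : (0:ℝ) < 3/4)]; norm_num)
  simpa using this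

lemma dd_bound {y : ℝ} (hy : y ∈ Set.Ioo (-(3/4) : ℝ) (3/4)) (n : ℕ) :
    ‖cc n * ((n:ℝ) * y ^ (n-1))‖ ≤ (4/3 : ℝ) * ((n:ℝ) * (3/4)^n) := by
  obtain ⟨h1, h2⟩ := hy
  have hya : |y| ≤ 3/4 := abs_le.2 ⟨h1.le, h2.le⟩
  rw [norm_mul, norm_mul, Real.norm_eq_abs, Real.norm_eq_abs, Real.norm_eq_abs,
    abs_of_pos (cc_pos n), Nat.abs_cast, abs_pow]
  rcases n with _ | m
  · simp
  · have : |y| ^ (m+1-1) ≤ (3/4 : ℝ)^m := by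
      simpa using pow_le_pow_left₀ (abs_nonneg y) hya m
    calc cc (m+1) * (((m+1 : ℕ):ℝ) * |y|^(m+1-1))
        = cc (m+1) * ((m+1 : ℕ):ℝ) * |y|^(m+1-1) := by ring
      _
        ≤ 1 * ((m+1 : ℕ):ℝ) * (3/4:ℝ)^m := by
          apply mul_le_mul (mul_le_mul_of_nonneg_right (cc_le_one _) (by positivity)) this
            (by positivity) (by positivity)
      _ = (4/3:ℝ) * (((m+1:ℕ):ℝ) * (3/4)^(m+1)) := by push_cast; ring

lemma hasDerivAt_FF {y : ℝ} (hy : y ∈ Set.Ioo (-(3/4) : ℝ) (3/4)) :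
    HasDerivAt FF (DD y) y := by
  apply hasDerivAt_tsum_of_isPreconnected uu_summable isOpen_Ioo
    (convex_Ioo _ _).isPreconnected
    (g := fun n x => cc n * x ^ n) (g' := fun n x => cc n * ((n:ℝ) * x ^ (n-1)))
    (fun n x _ => ((hasDerivAt_pow n x).const_mul (cc n)))
    (fun n x hx => dd_bound hx n)
    (y₀ := 0) (by constructor <;> norm_num)
    (summable_FF (by norm_num)) hy

lemma summable_DD {y : ℝ} (hy : y ∈ Set.Ioo (-(3/4) : ℝ) (3/4)) :
    Summable (fun n => cc n * ((n:ℝ) * y ^ (n-1))) :=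
  Summable.of_norm_bounded uu_summable (dd_bound hy)

lemma DD_eq {y : ℝ} (hy : y ∈ Set.Ioo (-(3/4) : ℝ) (3/4)) :
    (1 - y) * DD y = FF y / 2 := by
  have hys : |y| < 1 := by
    obtain ⟨h1,h2⟩ := hy; rw [abs_lt]; constructor <;> linarith
  have hsum := summable_DD hy
  have h1 : DD y = ∑' n : ℕ, cc (n+1) * (((n:ℝ)+1) * y ^ n) := by
    rw [DD, Summable.tsum_eq_zero_add hsum]
    simp
  have h2 : ∀ n : ℕ, cc (n+1) * (((n:ℝ)+1) * y ^ n)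
      = (cc n * ((n:ℝ) * y^(n-1))) * y + (1/2) * (cc n * y ^ n) := by
    intro n
    have := cc_succ n
    have hn : cc (n+1) * (((n:ℝ)+1) * y ^ n) = (((n:ℝ) + 1/2) * cc n) * y ^ n := by
      rw [← this]; ring
    rw [hn]
    rcases n with _ | m
    · simp
    · push_cast
      rw [pow_succ]
      ring
  have hs1 : Summable (fun n => (cc n * ((n:ℝ) * y^(n-1))) * y) := hsum.mul_right y
  have hs2 : Summable (fun n => (1/2 : ℝ) * (cc n * y ^ n)) :=
    (summable_FF hys).mul_left _
  have h3 : DD y = (∑' n, (cc n * ((n:ℝ) * y^(n-1))) * y) + ∑' n, (1/2:ℝ) * (cc n * y^n) := by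
    rw [h1, ← Summable.tsum_add hs1 hs2]
    exact tsum_congr h2
  rw [tsum_mul_right, tsum_mul_left, ← DD, ← FF] at h3
  linear_combination h3

lemma FF_zero : FF 0 = 1 := by
  rw [FF, tsum_eq_single 0 (by intro n hn; simp [zero_pow hn])]
  simpa using cc_zero

lemma FF_sq {y : ℝ} (hy : y ∈ Set.Ico (0:ℝ) (3/4)) : FF y ^ 2 * (1 - y) = 1 := by
  obtain ⟨h0, h34⟩ := hy
  have key : ∀ x ∈ Set.Icc (0:ℝ) y, HasDerivWithinAt (fun x => FF x ^ 2 * (1-x)) 0 (Set.Ici x) x := by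
    intro x hx
    have hxm : x ∈ Set.Ioo (-(3/4):ℝ) (3/4) := ⟨by linarith [hx.1], by linarith [hx.2]⟩
    have hF := hasDerivAt_FF hxm
    have hD := DD_eq hxm
    have h : HasDerivAt (fun x => FF x ^ 2 * (1-x))
        ((2 * FF x ^ 1 * DD x) * (1-x) + FF x ^ 2 * (0 - 1)) x := by
      exact ((hF.pow 2).mul ((hasDerivAt_const x (1:ℝ)).sub (hasDerivAt_id x)))
    have hzero : (2 * FF x ^ 1 * DD x) * (1-x) + FF x ^ 2 * (0 - 1) = 0 := by
      have : 2 * ((1-x) * DD x) = FF x := by rw [hD]; ring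
      linear_combination FF x * this
    rw [hzero] at h
    exact h.hasDerivWithinAt
  have cont : ContinuousOn (fun x => FF x ^ 2 * (1-x)) (Set.Icc 0 y) := by
    intro x hx
    have hxm : x ∈ Set.Ioo (-(3/4):ℝ) (3/4) := ⟨by linarith [hx.1], by linarith [hx.2]⟩
    exact (((hasDerivAt_FF hxm).continuousAt.pow 2).mul
      (continuous_const.sub continuous_id).continuousAt).continuousWithinAt
  have := constant_of_has_deriv_right_zero cont (fun x hx => key x (Set.mem_Icc_of_Ico hx)) y
    (Set.right_mem_Icc.2 h0)
  rw [this, FF_zero]; norm_num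

lemma FF_ge_one {y : ℝ} (hy : y ∈ Set.Ico (0:ℝ) 1) : 1 ≤ FF y := by
  have hys : |y| < 1 := by rw [abs_of_nonneg hy.1]; exact hy.2
  have := Summable.le_tsum (summable_FF hys) 0 (fun n _ => mul_nonneg (cc_pos n).le (pow_nonneg hy.1 n))
  simpa [cc_zero, FF] using this

lemma FF_eq {y : ℝ} (hy : y ∈ Set.Ico (0:ℝ) (3/4)) : FF y = (1-y) ^ (-(1/2) : ℝ) := by
  have h1 := FF_sq hy
  have hpos : (0:ℝ) < 1 - y := by linarith [hy.2]
  have hF : 0 < FF y := lt_of_lt_of_le one_pos (FF_ge_one ⟨hy.1, by linarith [hy.2]⟩)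
  have h2 : FF y ^ 2 = (1-y)⁻¹ := by field_simp at h1 ⊢; linarith [h1]
  rw [← Real.sqrt_sq hF.le, h2, Real.sqrt_eq_rpow, ← Real.rpow_neg_one (1-y),
    ← Real.rpow_mul hpos.le]
  norm_num

lemma betaR {u v : ℝ} (hu : 0 < u) (hv : 0 < v) :
    ∫ t in Set.Ioo (0:ℝ) 1, t ^ (u-1) * (1-t) ^ (v-1)
      = Real.Gamma u * Real.Gamma v / Real.Gamma (u+v) := by
  have h1 : Complex.betaIntegral u v
      = ((∫ t in (0:ℝ)..1, t ^ (u-1) * (1-t) ^ (v-1) : ℝ) : ℂ) := by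
    rw [Complex.betaIntegral, ← intervalIntegral.integral_ofReal]
    apply intervalIntegral.integral_congr
    intro x hx
    rw [Set.uIcc_of_le zero_le_one] at hx
    push_cast
    rw [Complex.ofReal_cpow hx.1, Complex.ofReal_cpow (by linarith [hx.2] : (0:ℝ) ≤ 1 - x)]
    push_cast
    ring
  have h2 := Complex.Gamma_mul_Gamma_eq_betaIntegral
    (by simpa using hu : 0 < (u:ℂ).re) (by simpa using hv : 0 < (v:ℂ).re)
  rw [h1] at h2
  rw [← Complex.ofReal_add, Complex.Gamma_ofReal, Complex.Gamma_ofReal,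
    Complex.Gamma_ofReal] at h2
  have h3 : Real.Gamma u * Real.Gamma v
      = Real.Gamma (u+v) * ∫ t in (0:ℝ)..1, t ^ (u-1) * (1-t) ^ (v-1) := by
    exact_mod_cast h2
  have h4 : Real.Gamma (u+v) ≠ 0 := (Real.Gamma_pos_of_pos (by linarith)).ne'
  rw [intervalIntegral.integral_of_le zero_le_one, integral_Ioc_eq_integral_Ioo] at h3
  rw [h3]
  field_simp

lemma Gamma_nat_add_half (n : ℕ) :
    Real.Gamma ((n:ℝ) + 1/2) = pochR (1/2) n * Real.Gamma (1/2) := by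
  induction n with
  | zero => simp [pochR_zero]
  | succ n ih =>
    have h : ((n+1 : ℕ):ℝ) + 1/2 = ((n:ℝ) + 1/2) + 1 := by push_cast; ring
    rw [h, Real.Gamma_add_one (by positivity), ih, pochR_succ]
    ring

-- integrability of the beta integrand on Ioo 0 1
lemma beta_integrableOn {u v : ℝ} (hu : 0 < u) (hv : 0 < v) :
    IntegrableOn (fun t : ℝ => t ^ (u-1) * (1-t) ^ (v-1)) (Set.Ioo 0 1) := by
  have hc := Complex.betaIntegral_convergent
    (by simpa using hu : 0 < (u:ℂ).re) (by simpa using hv : 0 < (v:ℂ).re)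
  rw [intervalIntegrable_iff_integrableOn_Ioc_of_le zero_le_one] at hc
  have hre : IntegrableOn
      (fun x : ℝ => ((x:ℂ) ^ ((u:ℂ)-1) * ((1:ℂ)-x) ^ ((v:ℂ)-1)).re) (Set.Ioc 0 1) := hc.re
  have heq : IntegrableOn (fun t : ℝ => t ^ (u-1) * (1-t) ^ (v-1)) (Set.Ioc 0 1) := by
    apply hre.congr_fun ?_ measurableSet_Ioc
    intro x hx
    have e1 : ((x:ℂ) ^ ((u:ℂ)-1)) = ((x ^ (u-1) : ℝ) : ℂ) := by
      rw [Complex.ofReal_cpow hx.1.le]; push_cast; ring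
    have e2 : ((1:ℂ) - (x:ℂ)) ^ ((v:ℂ)-1) = (((1-x) ^ (v-1) : ℝ) : ℂ) := by
      rw [Complex.ofReal_cpow (by linarith [hx.2] : (0:ℝ) ≤ 1-x)]; push_cast; ring
    simp only [e1, e2, ← Complex.ofReal_mul, Complex.ofReal_re]
  exact heq.mono_set Set.Ioo_subset_Ioc_self

noncomputable def ff (n : ℕ) (t : ℝ) : ℝ :=
  (cc n * (1/2)^n) * (t ^ ((n:ℝ) - 1/2) * (1-t) ^ (-(1/2) : ℝ))

lemma J_eq (n : ℕ) :
    ∫ t in Set.Ioo (0:ℝ) 1, t ^ ((n:ℝ) - 1/2) * (1-t) ^ (-(1/2) : ℝ)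
      = Real.pi * cc n := by
  have h := betaR (u := (n:ℝ) + 1/2) (v := 1/2) (by positivity) (by norm_num)
  have e1 : (n:ℝ) + 1/2 - 1 = (n:ℝ) - 1/2 := by ring
  have e2 : (1/2 : ℝ) - 1 = -(1/2) := by norm_num
  rw [e1, e2] at h
  rw [h]
  have e3 : (n:ℝ) + 1/2 + 1/2 = (n:ℝ) + 1 := by ring
  rw [e3, Real.Gamma_nat_eq_factorial, Gamma_nat_add_half, Real.Gamma_one_half_eq, cc]
  rw [mul_assoc, Real.mul_self_sqrt Real.pi_pos.le]
  ring

lemma ff_integral (n : ℕ) :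
    ∫ t in Set.Ioo (0:ℝ) 1, ff n t = Real.pi * (cc n ^ 2 * (1/2)^n) := by
  unfold ff
  rw [integral_const_mul, J_eq]
  ring

lemma ff_integrableOn (n : ℕ) : IntegrableOn (ff n) (Set.Ioo 0 1) := by
  unfold ff
  apply Integrable.const_mul
  have := beta_integrableOn (u := (n:ℝ) + 1/2) (v := 1/2) (by positivity) (by norm_num)
  have e1 : (n:ℝ) + 1/2 - 1 = (n:ℝ) - 1/2 := by ring
  have e2 : (1/2 : ℝ) - 1 = -(1/2) := by norm_num
  rwa [e1, e2] at this

lemma ff_nonneg {n : ℕ} {t : ℝ} (ht : t ∈ Set.Ioo (0:ℝ) 1) : 0 ≤ ff n t := by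
  have := cc_pos n
  unfold ff
  exact mul_nonneg (by positivity)
    (mul_nonneg (Real.rpow_nonneg ht.1.le _) (Real.rpow_nonneg (by linarith [ht.2]) _))

lemma summable_cc_sq : Summable (fun n => cc n ^ 2 * (1/2 : ℝ)^n) := by
  apply Summable.of_nonneg_of_le (fun n => by positivity)
    (fun n => ?_) (summable_geometric_of_lt_one (by norm_num) (by norm_num : (1/2:ℝ) < 1))
  have h1 := cc_le_one n
  have h2 := (cc_pos n).le
  calc cc n ^ 2 * (1/2:ℝ)^n ≤ 1 * (1/2:ℝ)^n := by
        apply mul_le_mul_of_nonneg_right _ (by positivity)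
        nlinarith
    _ = (1/2:ℝ)^n := one_mul _

lemma swap_eq :
    ∑' n : ℕ, cc n ^ 2 * (1/2 : ℝ)^n
      = (1/Real.pi) * ∫ t in Set.Ioo (0:ℝ) 1,
          t ^ (-(1/2) : ℝ) * (1-t) ^ (-(1/2):ℝ) * (1-t/2) ^ (-(1/2):ℝ) := by
  have hmeas : ∀ n : ℕ, AEStronglyMeasurable (ff n) (volume.restrict (Set.Ioo (0:ℝ) 1)) :=
    fun n => (ff_integrableOn n).aestronglyMeasurable
  have hlin : ∀ n : ℕ, ∫⁻ t in Set.Ioo (0:ℝ) 1, ‖ff n t‖₊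
      = ENNReal.ofReal (Real.pi * (cc n ^ 2 * (1/2)^n)) := by
    intro n
    rw [← ff_integral n, ofReal_integral_eq_lintegral_ofReal (ff_integrableOn n)
      ((ae_restrict_iff' measurableSet_Ioo).2 (ae_of_all _ (fun t ht => ff_nonneg ht)))]
    apply lintegral_congr_ae
    filter_upwards [(ae_restrict_iff' measurableSet_Ioo).2
      (ae_of_all _ (fun t (ht : t ∈ Set.Ioo (0:ℝ) 1) => ff_nonneg (n := n) ht))] with t ht
    rw [← Real.enorm_eq_ofReal ht, enorm_eq_nnnorm]
  have hne : (∑' n : ℕ, ∫⁻ t in Set.Ioo (0:ℝ) 1, ‖ff n t‖₊) ≠ ⊤ := by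
    simp_rw [hlin]
    rw [← ENNReal.ofReal_tsum_of_nonneg (fun n => by positivity)
      (summable_cc_sq.mul_left Real.pi)]
    exact ENNReal.ofReal_ne_top
  have hswap := MeasureTheory.integral_tsum hmeas hne
  have hpt : Set.EqOn (fun t : ℝ => ∑' n : ℕ, ff n t)
      (fun t : ℝ => t ^ (-(1/2) : ℝ) * (1-t) ^ (-(1/2):ℝ) * (1-t/2) ^ (-(1/2):ℝ))
      (Set.Ioo 0 1) := by
    intro t ht
    have e : ∀ n : ℕ, ff n t
        = (cc n * (t/2)^n) * (t ^ (-(1/2):ℝ) * (1-t) ^ (-(1/2):ℝ)) := by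
      intro n
      unfold ff
      rw [show ((n:ℝ) - 1/2) = (n:ℝ) + (-(1/2)) by ring, Real.rpow_add ht.1,
        Real.rpow_natCast]
      ring
    simp only [e]
    rw [tsum_mul_right, ← FF]
    rw [FF_eq (⟨by linarith [ht.1], by linarith [ht.2]⟩ : t/2 ∈ Set.Ico (0:ℝ) (3/4))]
    ring
  have hint : ∫ t in Set.Ioo (0:ℝ) 1, ∑' n : ℕ, ff n t
      = ∫ t in Set.Ioo (0:ℝ) 1,
          t ^ (-(1/2) : ℝ) * (1-t) ^ (-(1/2):ℝ) * (1-t/2) ^ (-(1/2):ℝ) :=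
    setIntegral_congr_fun measurableSet_Ioo hpt
  rw [← hint, hswap]
  simp_rw [ff_integral]
  rw [tsum_mul_left]
  have hπ : Real.pi ≠ 0 := Real.pi_ne_zero
  field_simp


lemma image_one_sub_sq : (fun v : ℝ => 1 - v^2) '' Set.Ioo 0 1 = Set.Ioo 0 1 := by
  ext t
  constructor
  · rintro ⟨v, ⟨hv0, hv1⟩, rfl⟩
    constructor
    · show (0:ℝ) < 1 - v^2
      nlinarith
    · show (1:ℝ) - v^2 < 1
      nlinarith
  · rintro ⟨ht0, ht1⟩
    refine ⟨Real.sqrt (1 - t), ⟨Real.sqrt_pos.2 (by linarith), ?_⟩, ?_⟩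
    · nlinarith [Real.sq_sqrt (by linarith : (0:ℝ) ≤ 1 - t), Real.sqrt_nonneg (1-t)]
    · show (1:ℝ) - Real.sqrt (1-t) ^ 2 = t
      rw [Real.sq_sqrt (by linarith : (0:ℝ) ≤ 1 - t)]; ring

lemma image_pow4 : (fun v : ℝ => v^4) '' Set.Ioo 0 1 = Set.Ioo 0 1 := by
  ext t
  constructor
  · rintro ⟨v, ⟨hv0, hv1⟩, rfl⟩
    constructor
    · show (0:ℝ) < v^4
      positivity
    · show v^4 < (1:ℝ)
      exact pow_lt_one₀ hv0.le hv1 (by norm_num)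
  · rintro ⟨ht0, ht1⟩
    refine ⟨t ^ ((1:ℝ)/4), ⟨Real.rpow_pos_of_pos ht0 _, ?_⟩, ?_⟩
    · calc t ^ ((1:ℝ)/4) < 1 ^ ((1:ℝ)/4) := by
            apply Real.rpow_lt_rpow ht0.le ht1 (by norm_num)
        _ = 1 := Real.one_rpow _
    · show (t ^ ((1:ℝ)/4))^4 = t
      rw [← Real.rpow_natCast (t ^ ((1:ℝ)/4)) 4, ← Real.rpow_mul ht0.le]
      norm_num

lemma sub1 :
    ∫ t in Set.Ioo (0:ℝ) 1, t ^ (-(1/2):ℝ) * (1-t) ^ (-(1/2):ℝ) * (1-t/2) ^ (-(1/2):ℝ)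
      = ∫ v in Set.Ioo (0:ℝ) 1, 2 * Real.sqrt 2 * (1-v^4) ^ (-(1/2):ℝ) := by
  have hder : ∀ v ∈ Set.Ioo (0:ℝ) 1,
      HasDerivWithinAt (fun v : ℝ => 1 - v^2) (-(2*v)) (Set.Ioo 0 1) v := by
    intro v _
    have : HasDerivAt (fun v : ℝ => 1 - v^2) (-(2*v)) v := by
      simpa using ((hasDerivAt_pow 2 v).const_sub 1)
    exact this.hasDerivWithinAt
  have hinj : Set.InjOn (fun v : ℝ => 1 - v^2) (Set.Ioo 0 1) := by
    intro a ha b hb h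
    simp only at h
    have h2 : (a - b) * (a + b) = 0 := by linear_combination -h
    rcases mul_eq_zero.1 h2 with h3 | h3
    · linarith
    · exfalso; have := ha.1; have := hb.1; linarith
  have := integral_image_eq_integral_abs_deriv_smul measurableSet_Ioo hder hinj
    (fun t => t ^ (-(1/2):ℝ) * (1-t) ^ (-(1/2):ℝ) * (1-t/2) ^ (-(1/2):ℝ))
  rw [image_one_sub_sq] at this
  rw [this]
  apply setIntegral_congr_fun measurableSet_Ioo
  intro v hv
  obtain ⟨hv0, hv1⟩ := hv
  simp only [smul_eq_mul]
  have h1 : (1 - (1-v^2)) = v^2 := by ring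
  have h2 : (1 - (1-v^2)/2) = (1+v^2)/2 := by ring
  rw [h1, h2]
  have h3 : ((v^2 : ℝ)) ^ (-(1/2):ℝ) = v⁻¹ := by
    rw [← Real.rpow_natCast v 2, ← Real.rpow_mul hv0.le,
      show ((2:ℕ):ℝ) * (-(1/2)) = -1 by norm_num, Real.rpow_neg_one]
  have h4 : (((1+v^2)/2 : ℝ)) ^ (-(1/2):ℝ) = Real.sqrt 2 * (1+v^2) ^ (-(1/2):ℝ) := by
    rw [Real.div_rpow (by positivity) (by norm_num),
      show ((2:ℝ)) ^ (-(1/2):ℝ) = (Real.sqrt 2)⁻¹ by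
        rw [Real.rpow_neg (by norm_num), Real.sqrt_eq_rpow]]
    field_simp
  have h5 : (1-v^2 : ℝ) ^ (-(1/2):ℝ) * (1+v^2) ^ (-(1/2):ℝ) = (1-v^4) ^ (-(1/2):ℝ) := by
    rw [← Real.mul_rpow (by nlinarith) (by positivity),
      show ((1-v^2) * (1+v^2) : ℝ) = 1 - v^4 by ring]
  rw [abs_neg, abs_of_pos (by positivity), h3, h4, ← h5]
  field_simp

lemma sub2 :
    ∫ w in Set.Ioo (0:ℝ) 1, w ^ ((1:ℝ)/4 - 1) * (1-w) ^ ((1:ℝ)/2 - 1)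
      = ∫ v in Set.Ioo (0:ℝ) 1, 4 * (1-v^4) ^ (-(1/2):ℝ) := by
  have hder : ∀ v ∈ Set.Ioo (0:ℝ) 1,
      HasDerivWithinAt (fun v : ℝ => v^4) (4*v^3) (Set.Ioo 0 1) v := by
    intro v _
    have : HasDerivAt (fun v : ℝ => v^4) (4*v^3) v := by
      simpa using (hasDerivAt_pow 4 v)
    exact this.hasDerivWithinAt
  have hinj : Set.InjOn (fun v : ℝ => v^4) (Set.Ioo 0 1) := by
    intro a ha b hb h
    simp only at h
    have h2 : (a - b) * (a^3 + a^2*b + a*b^2 + b^3) = 0 := by linear_combination h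
    rcases mul_eq_zero.1 h2 with h3 | h3
    · linarith
    · exfalso
      have ha0 := ha.1; have hb0 := hb.1
      have : (0:ℝ) < a^3 + a^2*b + a*b^2 + b^3 := by positivity
      linarith
  have := integral_image_eq_integral_abs_deriv_smul measurableSet_Ioo hder hinj
    (fun w => w ^ ((1:ℝ)/4 - 1) * (1-w) ^ ((1:ℝ)/2 - 1))
  rw [image_pow4] at this
  rw [this]
  apply setIntegral_congr_fun measurableSet_Ioo
  intro v hv
  obtain ⟨hv0, hv1⟩ := hv
  simp only [smul_eq_mul]
  have h3 : ((v^4 : ℝ)) ^ ((1:ℝ)/4 - 1) = (v^3)⁻¹ := by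
    rw [← Real.rpow_natCast v 4, ← Real.rpow_mul hv0.le,
      show ((4:ℕ):ℝ) * ((1:ℝ)/4 - 1) = -(3:ℕ) by norm_num, Real.rpow_neg hv0.le,
      Real.rpow_natCast]
  rw [h3, abs_of_pos (by positivity),
    show ((1:ℝ)/2 - 1) = -(1/2) by norm_num]
  field_simp

theorem hypR_half_half_one_half :
    hypR (1/2) (1/2) 1 (1/2) =
      Real.Gamma (1/4) ^ 2 / (2 * Real.pi ^ ((3:ℝ)/2)) := by
  have hstep1 : hypR (1/2) (1/2) 1 (1/2) = ∑' n : ℕ, cc n ^ 2 * (1/2 : ℝ)^n := by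
    unfold hypR
    apply tsum_congr
    intro n
    rw [pochR_one, cc]
    have : ((n.factorial : ℝ)) ≠ 0 := by positivity
    field_simp
  have hbeta := betaR (u := (1:ℝ)/4) (v := (1:ℝ)/2) (by norm_num) (by norm_num)
  rw [show (1:ℝ)/4 + 1/2 = 3/4 by norm_num] at hbeta
  have hI4 : ∫ v in Set.Ioo (0:ℝ) 1, (1-v^4) ^ (-(1/2):ℝ)
      = (1/4) * (Real.Gamma (1/4) * Real.Gamma (1/2) / Real.Gamma (3/4)) := by
    rw [← hbeta, sub2, integral_const_mul]
    ring
  have hG : 0 < Real.Gamma (1/4) := Real.Gamma_pos_of_pos (by norm_num)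
  have hg : 0 < Real.Gamma (3/4) := Real.Gamma_pos_of_pos (by norm_num)
  have hgg : Real.Gamma (1/4) * Real.Gamma (3/4) = Real.sqrt 2 * Real.pi := by
    have h := Real.Gamma_mul_Gamma_one_sub (1/4)
    rw [show (1:ℝ) - 1/4 = 3/4 by norm_num,
      show Real.pi * (1/4) = Real.pi/4 by ring, Real.sin_pi_div_four] at h
    rw [h, div_eq_iff (by positivity : (Real.sqrt 2/2 : ℝ) ≠ 0)]
    linear_combination (-(Real.pi/2)) * (Real.mul_self_sqrt (by norm_num : (0:ℝ) ≤ 2))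
  have hpow : Real.pi ^ ((3:ℝ)/2) = Real.pi * Real.sqrt Real.pi := by
    rw [show (3:ℝ)/2 = 1 + 1/2 by norm_num, Real.rpow_add Real.pi_pos, Real.rpow_one,
      ← Real.sqrt_eq_rpow]
  rw [hstep1, swap_eq, sub1, integral_const_mul, hI4, Real.Gamma_one_half_eq, hpow]
  have h2 : Real.sqrt 2 * Real.sqrt 2 = 2 := Real.mul_self_sqrt (by norm_num)
  have hπ : Real.sqrt Real.pi * Real.sqrt Real.pi = Real.pi :=
    Real.mul_self_sqrt Real.pi_pos.le
  have hπ0 : Real.pi ≠ 0 := Real.pi_ne_zero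
  have hsπ0 : Real.sqrt Real.pi ≠ 0 := by positivity
  field_simp
  linear_combination (4*Real.sqrt 2) * hπ
    - 4 * hgg
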